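/- arXiv:2511.22932 — 6 statements merged into one kernel-verified Lean document; each statement's English description precedes it below -/
import Mathlib

section
/- For every angle α ∈ ℝ, the minimal wave speed c*(α) = inf_{λ>0} g_α(λ)/λ is a well-defined positive real number, i.e., the set {g_α(λ)/λ : λ > 0} is nonempty and bounded below, and its infimum is strictly positive. -/
open Real Set Filter

noncomputable def delta1 (α : ℝ) : ℝ := Real.cos α
noncomputable def delta2 (α : ℝ) : ℝ := (1/2) * Real.cos α + (Real.sqrt 3 / 2) * Real.sin α
noncomputable def delta3 (α : ℝ) : ℝ := (1/2) * Real.cos α - (Real.sqrt 3 / 2) * Real.sin α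

/-- The function g_α(λ) from the minimal wave speed formula, with `a` playing the role of f'(0). -/
noncomputable def gfun (a α l : ℝ) : ℝ :=
  (1/6) * ((Real.exp (l * delta1 α) + Real.exp (-(l * delta1 α)))
    + (Real.exp (l * delta2 α) + Real.exp (-(l * delta2 α)))
    + (Real.exp (l * delta3 α) + Real.exp (-(l * delta3 α)))) - 1 + a

/-- The minimal wave speed c*(α) = inf_{λ>0} g_α(λ)/λ. -/
noncomputable def cstar (a α : ℝ) : ℝ := sInf {c : ℝ | ∃ l : ℝ, 0 < l ∧ c = gfun a α l / l}

lemma aux_cosh_quad_nonneg (x : ℝ) (hx : 0 ≤ x) : 1 + x ^ 2 / 2 ≤ Real.cosh x := by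
  have h : MonotoneOn (fun x : ℝ => Real.cosh x - x ^ 2 / 2) (Set.Ici 0) := by
    apply monotoneOn_of_deriv_nonneg (convex_Ici 0)
    · exact (Real.continuous_cosh.sub (by continuity)).continuousOn
    · intro y hy
      exact ((Real.differentiable_cosh y).sub ((differentiable_pow 2 y).div_const 2)).differentiableWithinAt
    · intro y hy
      rw [interior_Ici] at hy
      have : deriv (fun x : ℝ => Real.cosh x - x ^ 2 / 2) y = Real.sinh y - y := by
        rw [deriv_fun_sub (Real.differentiable_cosh y) ((differentiable_pow 2 y).div_const 2)]
        simp [Real.deriv_cosh, deriv_div_const, mul_comm]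
      rw [this]
      have := Real.self_le_sinh_iff.mpr (le_of_lt hy)
      linarith
  have := h (Set.self_mem_Ici) (Set.mem_Ici.mpr hx) hx
  simp [Real.cosh_zero] at this
  linarith

lemma aux_quad_le (x : ℝ) : 2 + x ^ 2 ≤ Real.exp x + Real.exp (-x) := by
  have h : 1 + |x| ^ 2 / 2 ≤ Real.cosh |x| := aux_cosh_quad_nonneg |x| (abs_nonneg x)
  rw [Real.cosh_abs, sq_abs, Real.cosh_eq] at h
  linarith

lemma aux_gfun_lb (a α l : ℝ) : a + l ^ 2 / 4 ≤ gfun a α l := by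
  have h1 := aux_quad_le (l * delta1 α)
  have h2 := aux_quad_le (l * delta2 α)
  have h3 := aux_quad_le (l * delta3 α)
  have hs : delta1 α ^ 2 + delta2 α ^ 2 + delta3 α ^ 2 = 3 / 2 := by
    have hsin := Real.sin_sq_add_cos_sq α
    have h3' : Real.sqrt 3 ^ 2 = 3 := Real.sq_sqrt (by norm_num)
    simp only [delta1, delta2, delta3]
    nlinarith [hsin, h3']
  unfold gfun
  nlinarith [h1, h2, h3, hs, sq_nonneg l]

lemma aux_sqrt_lb (a α l : ℝ) (ha : 0 < a) (hl : 0 < l) :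
    Real.sqrt a ≤ gfun a α l / l := by
  rw [le_div_iff₀ hl]
  have hg := aux_gfun_lb a α l
  have hs : Real.sqrt a ^ 2 = a := Real.sq_sqrt ha.le
  nlinarith [sq_nonneg (l / 2 - Real.sqrt a)]

theorem stmt0 (a : ℝ) (ha : 0 < a) (α : ℝ) :
    ({c : ℝ | ∃ l : ℝ, 0 < l ∧ c = gfun a α l / l}).Nonempty ∧
    BddBelow {c : ℝ | ∃ l : ℝ, 0 < l ∧ c = gfun a α l / l} ∧
    0 < cstar a α := by
  have hne : ({c : ℝ | ∃ l : ℝ, 0 < l ∧ c = gfun a α l / l}).Nonempty :=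
    ⟨gfun a α 1 / 1, 1, one_pos, rfl⟩
  have hlb : ∀ c ∈ {c : ℝ | ∃ l : ℝ, 0 < l ∧ c = gfun a α l / l}, Real.sqrt a ≤ c := by
    rintro c ⟨l, hl, rfl⟩
    exact aux_sqrt_lb a α l ha hl
  refine ⟨hne, ⟨Real.sqrt a, hlb⟩, ?_⟩
  have : Real.sqrt a ≤ cstar a α := le_csInf hne hlb
  have hpos : 0 < Real.sqrt a := Real.sqrt_pos.mpr ha
  linarith
end

section
/- Define G(c,λ) = c·λ − g_α(λ). Then there exists λ* > 0 such that G(c*(α), λ*) = 0, and: (i) if c > c*(α), there exist λ₁, λ₂ with 0 < λ₁ < λ* < λ₂ such that G(c,λ₁) = G(c,λ₂) = 0 and G(c,λ*) > 0; (ii) if c = c*(α), then λ* is the unique positive zero of λ ↦ G(c,λ); (iii) if c < c*(α), then G(c,λ) < 0 for every λ > 0. -/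
open Real Set Filter

-- cosh-type quadratic lower bound
lemma exp_add_exp_neg_ge (x : ℝ) : 2 + x^2/4 ≤ Real.exp x + Real.exp (-x) := by
  rcases le_total 0 x with hx | hx
  · have h1 : x/2 + (1:ℝ) ≤ Real.exp (x/2) := Real.add_one_le_exp _
    have h2 : (-x) + (1:ℝ) ≤ Real.exp (-x) := Real.add_one_le_exp _
    have h3 : Real.exp x = Real.exp (x/2) * Real.exp (x/2) := by
      rw [← Real.exp_add]; ring_nf
    nlinarith [Real.exp_pos (x/2), Real.exp_pos (-x)]
  · have h1 : (-x)/2 + (1:ℝ) ≤ Real.exp ((-x)/2) := Real.add_one_le_exp _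
    have h2 : x + (1:ℝ) ≤ Real.exp x := Real.add_one_le_exp _
    have h3 : Real.exp (-x) = Real.exp ((-x)/2) * Real.exp ((-x)/2) := by
      rw [← Real.exp_add]; ring_nf
    nlinarith [Real.exp_pos ((-x)/2), Real.exp_pos x]

lemma delta_sq_sum (α : ℝ) : delta1 α ^ 2 + delta2 α ^ 2 + delta3 α ^ 2 = 3/2 := by
  have h : Real.sqrt 3 ^ 2 = 3 := Real.sq_sqrt (by norm_num)
  have h2 := Real.sin_sq_add_cos_sq α
  simp only [delta1, delta2, delta3]
  nlinarith [h, h2]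

lemma gfun_lb (a α l : ℝ) : a + l^2/16 ≤ gfun a α l := by
  have h1 := exp_add_exp_neg_ge (l * delta1 α)
  have h2 := exp_add_exp_neg_ge (l * delta2 α)
  have h3 := exp_add_exp_neg_ge (l * delta3 α)
  have hs := delta_sq_sum α
  unfold gfun
  nlinarith [sq_nonneg l]

lemma gfun_zero (a α : ℝ) : gfun a α 0 = a := by simp [gfun]; norm_num

lemma gfun_cont (a α : ℝ) : Continuous (gfun a α) := by
  unfold gfun; fun_prop

-- strict midpoint AM-GM for exp
lemma exp_mid_le (u v : ℝ) : Real.exp ((u+v)/2) ≤ (Real.exp u + Real.exp v)/2 := by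
  have h : Real.exp ((u+v)/2) = Real.exp (u/2) * Real.exp (v/2) := by
    rw [← Real.exp_add]; ring_nf
  have hu : Real.exp u = Real.exp (u/2) * Real.exp (u/2) := by
    rw [← Real.exp_add]; ring_nf
  have hv : Real.exp v = Real.exp (v/2) * Real.exp (v/2) := by
    rw [← Real.exp_add]; ring_nf
  rw [h, hu, hv]
  nlinarith [sq_nonneg (Real.exp (u/2) - Real.exp (v/2))]

lemma exp_mid_lt (u v : ℝ) (h : u ≠ v) :
    Real.exp ((u+v)/2) < (Real.exp u + Real.exp v)/2 := by
  have hne : Real.exp (u/2) ≠ Real.exp (v/2) := by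
    intro hc; exact h (by have := Real.exp_injective hc; linarith)
  have h' : Real.exp ((u+v)/2) = Real.exp (u/2) * Real.exp (v/2) := by
    rw [← Real.exp_add]; ring_nf
  have hsq : 0 < (Real.exp (u/2) - Real.exp (v/2))^2 := by
    have h0 : Real.exp (u/2) - Real.exp (v/2) ≠ 0 := sub_ne_zero.mpr hne
    exact lt_of_le_of_ne (sq_nonneg _) (Ne.symm (pow_ne_zero 2 h0))
  have hu : Real.exp u = Real.exp (u/2) * Real.exp (u/2) := by
    rw [← Real.exp_add]; ring_nf
  have hv : Real.exp v = Real.exp (v/2) * Real.exp (v/2) := by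
    rw [← Real.exp_add]; ring_nf
  rw [h', hu, hv]
  nlinarith []

-- pair bound helpers
lemma pair_le (x y d : ℝ) :
    Real.exp (((x+y)/2) * d) + Real.exp (-(((x+y)/2) * d)) ≤
    ((Real.exp (x*d) + Real.exp (-(x*d))) + (Real.exp (y*d) + Real.exp (-(y*d))))/2 := by
  have h1 := exp_mid_le (x*d) (y*d)
  have h2 := exp_mid_le (-(x*d)) (-(y*d))
  have e1 : ((x+y)/2) * d = (x*d + y*d)/2 := by ring
  have e2 : -(((x+y)/2) * d) = ((-(x*d)) + (-(y*d)))/2 := by ring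
  rw [e2, e1]; linarith

lemma pair_lt (x y d : ℝ) (hxy : x ≠ y) (hd : d ≠ 0) :
    Real.exp (((x+y)/2) * d) + Real.exp (-(((x+y)/2) * d)) <
    ((Real.exp (x*d) + Real.exp (-(x*d))) + (Real.exp (y*d) + Real.exp (-(y*d))))/2 := by
  have hne : x*d ≠ y*d := by
    intro h; exact hxy (mul_right_cancel₀ hd h)
  have h1 := exp_mid_lt (x*d) (y*d) hne
  have h2 := exp_mid_le (-(x*d)) (-(y*d))
  have e1 : ((x+y)/2) * d = (x*d + y*d)/2 := by ring
  have e2 : -(((x+y)/2) * d) = ((-(x*d)) + (-(y*d)))/2 := by ring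
  rw [e2, e1]; linarith

-- strict midpoint convexity of gfun
lemma gfun_strict_mid (a α x y : ℝ) (hxy : x ≠ y) :
    gfun a α ((x+y)/2) < (gfun a α x + gfun a α y)/2 := by
  have hsum := delta_sq_sum α
  have hne : delta1 α ≠ 0 ∨ delta2 α ≠ 0 ∨ delta3 α ≠ 0 := by
    by_contra h
    push_neg at h
    obtain ⟨h1, h2, h3⟩ := h
    rw [h1, h2, h3] at hsum; norm_num at hsum
  unfold gfun
  rcases hne with hd | hd | hd
  · have := pair_lt x y (delta1 α) hxy hd
    have := pair_le x y (delta2 α)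
    have := pair_le x y (delta3 α)
    linarith
  · have := pair_le x y (delta1 α)
    have := pair_lt x y (delta2 α) hxy hd
    have := pair_le x y (delta3 α)
    linarith
  · have := pair_le x y (delta1 α)
    have := pair_le x y (delta2 α)
    have := pair_lt x y (delta3 α) hxy hd
    linarith

lemma exists_min (a : ℝ) (ha : 0 < a) (α : ℝ) :
    ∃ ls : ℝ, 0 < ls ∧ (∀ l : ℝ, 0 < l → gfun a α ls / ls ≤ gfun a α l / l) := by
  set M : ℝ := gfun a α 1 with hM
  have hMa : a + 1/16 ≤ M := by have := gfun_lb a α 1; rw [hM]; nlinarith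
  have hM0 : 0 < M := by linarith
  set ε : ℝ := a / (M + 1) with hε
  set R : ℝ := 16 * (M + 1) with hR
  have hε0 : 0 < ε := by positivity
  have hε1 : ε < 1 := by
    rw [hε, div_lt_one (by linarith)]; linarith
  have hR1 : (1:ℝ) ≤ R := by rw [hR]; nlinarith
  have h1mem : (1:ℝ) ∈ Icc ε R := ⟨le_of_lt hε1, hR1⟩
  have hcont : ContinuousOn (fun l => gfun a α l / l) (Icc ε R) :=
    ((gfun_cont a α).continuousOn).div continuousOn_id
      (fun x hx => ne_of_gt (lt_of_lt_of_le hε0 hx.1))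
  obtain ⟨ls, hlsmem, hmin⟩ :=
    isCompact_Icc.exists_isMinOn ⟨1, h1mem⟩ hcont
  have hls0 : 0 < ls := lt_of_lt_of_le hε0 hlsmem.1
  have hminle : ∀ y ∈ Icc ε R, gfun a α ls / ls ≤ gfun a α y / y := by
    intro y hy; exact hmin hy
  have hlsM : gfun a α ls / ls ≤ M := by
    have := hminle 1 h1mem; simpa using this
  refine ⟨ls, hls0, ?_⟩
  intro l hl
  by_cases hmem : l ∈ Icc ε R
  · exact hminle l hmem
  · have hglb := gfun_lb a α l
    rw [mem_Icc, not_and_or] at hmem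
    rcases hmem with hlow | hhigh
    · push_neg at hlow
      -- l < ε : gfun/l ≥ a/l > a/ε = M+1 > M
      have h1 : a / l ≤ gfun a α l / l :=
        (div_le_div_iff_of_pos_right hl).mpr (by nlinarith)
      have h2 : M + 1 < a / l := by
        rw [lt_div_iff₀ hl]
        have : l * (M+1) < ε * (M+1) := by
          apply mul_lt_mul_of_pos_right hlow (by linarith)
        rw [hε] at this
        rw [div_mul_cancel₀] at this
        · linarith
        · linarith
      linarith
    · push_neg at hhigh
      -- l > R : gfun/l ≥ (a + l²/16)/l > M
      have h2 : M < gfun a α l / l := by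
        rw [lt_div_iff₀ hl]
        have hlR : R < l := hhigh
        have : M * l + l ≤ l * l / 16 := by
          rw [hR] at hlR; nlinarith
        nlinarith
      linarith

lemma cstar_spec (a : ℝ) (ha : 0 < a) (α : ℝ) :
    ∃ ls : ℝ, 0 < ls ∧ cstar a α = gfun a α ls / ls ∧
      ∀ l : ℝ, 0 < l → cstar a α ≤ gfun a α l / l := by
  obtain ⟨ls, hls, hmin⟩ := exists_min a ha α
  have hmem : gfun a α ls / ls ∈ {c : ℝ | ∃ l : ℝ, 0 < l ∧ c = gfun a α l / l} :=
    ⟨ls, hls, rfl⟩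
  have hbdd : BddBelow {c : ℝ | ∃ l : ℝ, 0 < l ∧ c = gfun a α l / l} := by
    refine ⟨0, ?_⟩
    rintro c ⟨l, hl, rfl⟩
    have h0 : 0 < gfun a α l := by have := gfun_lb a α l; nlinarith
    positivity
  have heq : cstar a α = gfun a α ls / ls := by
    unfold cstar
    apply le_antisymm (csInf_le hbdd hmem)
    apply le_csInf ⟨_, hmem⟩
    rintro c ⟨l, hl, rfl⟩
    exact hmin l hl
  refine ⟨ls, hls, heq, fun l hl => ?_⟩
  rw [heq]; exact hmin l hl

theorem stmt1 (a : ℝ) (ha : 0 < a) (α : ℝ) :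
    ∃ lstar : ℝ, 0 < lstar ∧ cstar a α * lstar - gfun a α lstar = 0 ∧
      (∀ c : ℝ, cstar a α < c →
        ∃ l1 l2 : ℝ, 0 < l1 ∧ l1 < lstar ∧ lstar < l2 ∧
          c * l1 - gfun a α l1 = 0 ∧ c * l2 - gfun a α l2 = 0 ∧
          0 < c * lstar - gfun a α lstar) ∧
      (∀ l : ℝ, 0 < l → cstar a α * l - gfun a α l = 0 → l = lstar) ∧
      (∀ c : ℝ, c < cstar a α → ∀ l : ℝ, 0 < l → c * l - gfun a α l < 0) := by
  obtain ⟨ls, hls, hceq, hle⟩ := cstar_spec a ha α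
  have hkey : ∀ l : ℝ, 0 < l → cstar a α * l ≤ gfun a α l := by
    intro l hl
    have h := hle l hl
    rw [le_div_iff₀ hl] at h
    exact h
  have hzero : cstar a α * ls - gfun a α ls = 0 := by
    rw [hceq]; field_simp; ring
  refine ⟨ls, hls, hzero, ?_, ?_, ?_⟩
  · -- (i) c > c*
    intro c hc
    have hGstar : 0 < c * ls - gfun a α ls := by
      nlinarith [mul_lt_mul_of_pos_right hc hls]
    have hcontG : Continuous (fun l : ℝ => c * l - gfun a α l) :=
      (continuous_const.mul continuous_id).sub (gfun_cont a α)
    -- l1 via IVT on [0, ls]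
    have hmem0 : (0:ℝ) ∈ Ioo ((fun l : ℝ => c * l - gfun a α l) 0)
        ((fun l : ℝ => c * l - gfun a α l) ls) := by
      constructor
      · simp [gfun_zero]; linarith
      · simpa using hGstar
    obtain ⟨l1, hl1mem, hl1eq⟩ :=
      intermediate_value_Ioo (le_of_lt hls) hcontG.continuousOn hmem0
    -- l2 via IVT on [ls, L]
    set L : ℝ := max (ls + 1) (16 * c + 16) with hL
    have hLls : ls < L := lt_of_lt_of_le (by linarith) (le_max_left _ _)
    have hLc : 16 * c + 16 ≤ L := le_max_right _ _
    have hL0 : 0 < L := lt_trans hls hLls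
    have hfL : c * L - gfun a α L < 0 := by
      have := gfun_lb a α L
      nlinarith
    have hmem0' : (0:ℝ) ∈ Ioo ((fun l : ℝ => c * l - gfun a α l) L)
        ((fun l : ℝ => c * l - gfun a α l) ls) := ⟨by simpa using hfL, by simpa using hGstar⟩
    obtain ⟨l2, hl2mem, hl2eq⟩ :=
      intermediate_value_Ioo' (le_of_lt hLls) hcontG.continuousOn hmem0'
    exact ⟨l1, l2, hl1mem.1, hl1mem.2, hl2mem.1, hl1eq, hl2eq, hGstar⟩
  · -- (ii) uniqueness at c = c*
    intro l hl heq
    by_contra hne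
    have h3 := gfun_strict_mid a α l ls hne
    have h4 := hkey ((l + ls)/2) (by linarith)
    nlinarith
  · -- (iii) c < c*
    intro c hc l hl
    have h := hkey l hl
    nlinarith [mul_lt_mul_of_pos_right hc hl]
end

section
/- Assume c > c*(α) and let λ₁ be the smallest positive root of c·λ = g(λ). Then the function Ū(ξ) := min{1, exp(λ₁·ξ)} is nondecreasing, takes values in [0,1], and satisfies the upper-solution differential inequality c·Ū′(ξ) ≥ (1/6)·𝒟_h[Ū](ξ) + f(Ū(ξ)) for every ξ ∈ ℝ with ξ ≠ 0. -/
open Real Set Filter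

/-- The discrete diffusion operator on the hexagonal lattice, in direction α. -/
noncomputable def Dh (α : ℝ) (U : ℝ → ℝ) (ξ : ℝ) : ℝ :=
  (U (ξ + delta1 α) + U (ξ - delta1 α)) + (U (ξ + delta2 α) + U (ξ - delta2 α))
    + (U (ξ + delta3 α) + U (ξ - delta3 α)) - 6 * U ξ

/-- Fisher-KPP conditions: f is C¹ on [0,1] with derivative f', f(0)=f(1)=0, f'(0)>0,
and 0 < f(s) ≤ f'(0)·s on (0,1). -/
def FisherKPP (f f' : ℝ → ℝ) : Prop :=
  (∀ s ∈ Set.Icc (0:ℝ) 1, HasDerivAt f (f' s) s) ∧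
  ContinuousOn f' (Set.Icc (0:ℝ) 1) ∧
  f 0 = 0 ∧ f 1 = 0 ∧ 0 < f' 0 ∧
  (∀ s ∈ Set.Ioo (0:ℝ) 1, 0 < f s ∧ f s ≤ f' 0 * s)

/-- A traveling wave with speed c: a C¹ function U : ℝ → [0,1] solving
c·U′ = (1/6)·𝒟_h[U] + f(U) with limits 0 at −∞ and 1 at +∞. -/
def IsTravelingWave (α : ℝ) (f : ℝ → ℝ) (c : ℝ) (U : ℝ → ℝ) : Prop :=
  ContDiff ℝ 1 U ∧ (∀ ξ, U ξ ∈ Set.Icc (0:ℝ) 1) ∧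
  (∀ ξ, c * deriv U ξ = (1/6) * Dh α U ξ + f (U ξ)) ∧
  Filter.Tendsto U Filter.atBot (nhds 0) ∧ Filter.Tendsto U Filter.atTop (nhds 1)

theorem stmt2 (α : ℝ) (f f' : ℝ → ℝ) (hf : FisherKPP f f')
    (c l1 : ℝ) (hc : cstar (f' 0) α < c)
    (hl1pos : 0 < l1) (hroot : c * l1 = gfun (f' 0) α l1)
    (hmin : ∀ l : ℝ, 0 < l → c * l = gfun (f' 0) α l → l1 ≤ l) :
    Monotone (fun ξ : ℝ => min 1 (Real.exp (l1 * ξ))) ∧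
    (∀ ξ : ℝ, min 1 (Real.exp (l1 * ξ)) ∈ Set.Icc (0:ℝ) 1) ∧
    (∀ ξ : ℝ, ξ ≠ 0 →
      (1/6) * Dh α (fun ζ : ℝ => min 1 (Real.exp (l1 * ζ))) ξ + f (min 1 (Real.exp (l1 * ξ)))
        ≤ c * deriv (fun ζ : ℝ => min 1 (Real.exp (l1 * ζ))) ξ) := by

  have hmem : ∀ ξ : ℝ, min 1 (Real.exp (l1 * ξ)) ∈ Set.Icc (0:ℝ) 1 := by
    intro ξ
    exact ⟨le_min zero_le_one (Real.exp_pos _).le, min_le_left _ _⟩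
  refine ⟨?_, hmem, ?_⟩
  · intro a b hab
    exact min_le_min le_rfl (Real.exp_le_exp.2 (by nlinarith))
  · intro ξ hξ
    rcases lt_or_gt_of_ne hξ with hneg | hpos
    · -- ξ < 0 : U = exp near ξ
      have hev : (fun ζ : ℝ => min 1 (Real.exp (l1 * ζ))) =ᶠ[nhds ξ] fun ζ => Real.exp (l1 * ζ) := by
        filter_upwards [Iio_mem_nhds hneg] with ζ hζ
        have : Real.exp (l1 * ζ) < 1 := by
          rw [← Real.exp_zero]
          exact Real.exp_lt_exp.2 (by nlinarith [mem_Iio.1 hζ])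
        exact min_eq_right this.le
      have hderiv : deriv (fun ζ : ℝ => min 1 (Real.exp (l1 * ζ))) ξ = Real.exp (l1 * ξ) * l1 := by
        rw [hev.deriv_eq]
        have : HasDerivAt (fun ζ : ℝ => Real.exp (l1 * ζ)) (Real.exp (l1 * ξ) * l1) ξ := by
          have h1 : HasDerivAt (fun ζ : ℝ => l1 * ζ) l1 ξ := by
            simpa using (hasDerivAt_id ξ).const_mul l1
          simpa using h1.exp
        exact this.deriv
      have hUlt : Real.exp (l1 * ξ) < 1 := by
        rw [← Real.exp_zero]; exact Real.exp_lt_exp.2 (by nlinarith)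
      have hUeq : min 1 (Real.exp (l1 * ξ)) = Real.exp (l1 * ξ) := min_eq_right hUlt.le
      have hfle : f (Real.exp (l1 * ξ)) ≤ f' 0 * Real.exp (l1 * ξ) :=
        (hf.2.2.2.2.2 _ ⟨Real.exp_pos _, hUlt⟩).2
      have hDh : Dh α (fun ζ : ℝ => min 1 (Real.exp (l1 * ζ))) ξ ≤
          (Real.exp (l1 * (ξ + delta1 α)) + Real.exp (l1 * (ξ - delta1 α)))
          + (Real.exp (l1 * (ξ + delta2 α)) + Real.exp (l1 * (ξ - delta2 α)))
          + (Real.exp (l1 * (ξ + delta3 α)) + Real.exp (l1 * (ξ - delta3 α)))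
          - 6 * Real.exp (l1 * ξ) := by
        unfold Dh
        simp only
        rw [hUeq]
        gcongr <;> exact min_le_right _ _
      rw [hderiv, hUeq]
      have hsum : ∀ d : ℝ, Real.exp (l1 * (ξ + d)) + Real.exp (l1 * (ξ - d)) =
          Real.exp (l1 * ξ) * (Real.exp (l1 * d) + Real.exp (-(l1 * d))) := by
        intro d
        rw [show l1 * (ξ + d) = l1 * ξ + l1 * d from by ring,
          show l1 * (ξ - d) = l1 * ξ + -(l1 * d) from by ring, Real.exp_add, Real.exp_add]
        ring
      have := hsum (delta1 α); have := hsum (delta2 α); have := hsum (delta3 α)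
      have hg : gfun (f' 0) α l1 = (1/6) * ((Real.exp (l1 * delta1 α) + Real.exp (-(l1 * delta1 α)))
          + (Real.exp (l1 * delta2 α) + Real.exp (-(l1 * delta2 α)))
          + (Real.exp (l1 * delta3 α) + Real.exp (-(l1 * delta3 α)))) - 1 + f' 0 := rfl
      nlinarith [Real.exp_pos (l1 * ξ), hroot]
    · -- ξ > 0 : U = 1 near ξ
      have hev : (fun ζ : ℝ => min 1 (Real.exp (l1 * ζ))) =ᶠ[nhds ξ] fun _ => (1:ℝ) := by
        filter_upwards [Ioi_mem_nhds hpos] with ζ hζ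
        have : (1:ℝ) ≤ Real.exp (l1 * ζ) := by
          rw [← Real.exp_zero]
          exact Real.exp_le_exp.2 (by nlinarith [mem_Ioi.1 hζ])
        exact min_eq_left this
      have hderiv : deriv (fun ζ : ℝ => min 1 (Real.exp (l1 * ζ))) ξ = 0 := by
        rw [hev.deriv_eq]; exact deriv_const _ _
      have hUeq : min 1 (Real.exp (l1 * ξ)) = 1 := by
        apply min_eq_left
        rw [← Real.exp_zero]
        exact Real.exp_le_exp.2 (by nlinarith)
      have hDh : Dh α (fun ζ : ℝ => min 1 (Real.exp (l1 * ζ))) ξ ≤ 0 := by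
        unfold Dh
        simp only
        rw [hUeq]
        have h := fun ζ : ℝ => min_le_left (1:ℝ) (Real.exp (l1 * ζ))
        nlinarith [h (ξ + delta1 α), h (ξ - delta1 α), h (ξ + delta2 α), h (ξ - delta2 α),
          h (ξ + delta3 α), h (ξ - delta3 α)]
      rw [hderiv, hUeq, hf.2.2.2.1]
      nlinarith
end

section
/- Assume c > c*(α) and hypothesis (H), let λ₁ < λ₂ be the two positive roots of c·λ = g(λ), let γ satisfy 0 < γ < min{λ₁·θ, λ₂ − λ₁}, and let M ≥ max{1, N / G(c, λ₁+γ)}. Then the function U̲(ξ) := max{0, (1 − M·exp(γ·ξ))·exp(λ₁·ξ)} satisfies 0 ≤ U̲(ξ) ≤ min{1, exp(λ₁·ξ)} for all ξ, and the lower-solution differential inequality c·U̲′(ξ) ≤ (1/6)·𝒟_h[U̲](ξ) + f(U̲(ξ)) for every ξ ∈ ℝ with ξ ≠ −(ln M)/γ. -/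
open Real Set Filter

lemma exp_pair_le (x y t s δ : ℝ) (ht : 0 ≤ t) (hs : 0 ≤ s) (hts : t + s = 1) :
    Real.exp ((t*x + s*y)*δ) + Real.exp (-((t*x + s*y)*δ))
      ≤ t * (Real.exp (x*δ) + Real.exp (-(x*δ))) + s * (Real.exp (y*δ) + Real.exp (-(y*δ))) := by
  have h1 := convexOn_exp.2 (Set.mem_univ (x*δ)) (Set.mem_univ (y*δ)) ht hs hts
  have h2 := convexOn_exp.2 (Set.mem_univ (-(x*δ))) (Set.mem_univ (-(y*δ))) ht hs hts
  simp only [smul_eq_mul] at h1 h2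
  rw [show (t*x + s*y)*δ = t*(x*δ) + s*(y*δ) from by ring]
  rw [show -(t*(x*δ) + s*(y*δ)) = t*(-(x*δ)) + s*(-(y*δ)) from by ring]
  linarith

lemma exp_pair_lt (x y t s δ : ℝ) (hxy : x ≠ y) (hδ : δ ≠ 0)
    (ht : 0 < t) (hs : 0 < s) (hts : t + s = 1) :
    Real.exp ((t*x + s*y)*δ) + Real.exp (-((t*x + s*y)*δ))
      < t * (Real.exp (x*δ) + Real.exp (-(x*δ))) + s * (Real.exp (y*δ) + Real.exp (-(y*δ))) := by
  have hne : x*δ ≠ y*δ := fun h => hxy (mul_right_cancel₀ hδ h)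
  have hne2 : -(x*δ) ≠ -(y*δ) := fun h => hne (neg_injective h)
  have h1 := strictConvexOn_exp.2 (Set.mem_univ (x*δ)) (Set.mem_univ (y*δ)) hne ht hs hts
  have h2 := strictConvexOn_exp.2 (Set.mem_univ (-(x*δ))) (Set.mem_univ (-(y*δ))) hne2 ht hs hts
  simp only [smul_eq_mul] at h1 h2
  rw [show (t*x + s*y)*δ = t*(x*δ) + s*(y*δ) from by ring]
  rw [show -(t*(x*δ) + s*(y*δ)) = t*(-(x*δ)) + s*(-(y*δ)) from by ring]
  linarith

lemma delta_ne (α : ℝ) : delta1 α ≠ 0 ∨ delta2 α ≠ 0 ∨ delta3 α ≠ 0 := by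
  by_contra h
  push_neg at h
  obtain ⟨h1, h2, h3⟩ := h
  simp only [delta1, delta2, delta3] at h1 h2 h3
  have hs3 : Real.sqrt 3 ^ 2 = 3 := Real.sq_sqrt (by norm_num)
  have hsc := Real.sin_sq_add_cos_sq α
  have h4 : Real.sqrt 3 * Real.sin α = 0 := by linarith
  have h5 : 3 * Real.sin α ^ 2 = 0 := by nlinarith
  nlinarith

noncomputable def sfun (α l : ℝ) : ℝ :=
  (Real.exp (l * delta1 α) + Real.exp (-(l * delta1 α)))
    + (Real.exp (l * delta2 α) + Real.exp (-(l * delta2 α)))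
    + (Real.exp (l * delta3 α) + Real.exp (-(l * delta3 α)))

lemma sfun_conv (α x y t s : ℝ) (hxy : x ≠ y) (ht : 0 < t) (hs : 0 < s) (hts : t + s = 1) :
    sfun α (t*x + s*y) < t * sfun α x + s * sfun α y := by
  obtain h | h | h := delta_ne α
  · have p1 := exp_pair_lt x y t s (delta1 α) hxy h ht hs hts
    have p2 := exp_pair_le x y t s (delta2 α) ht.le hs.le hts
    have p3 := exp_pair_le x y t s (delta3 α) ht.le hs.le hts
    simp only [sfun]; linarith
  · have p1 := exp_pair_le x y t s (delta1 α) ht.le hs.le hts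
    have p2 := exp_pair_lt x y t s (delta2 α) hxy h ht hs hts
    have p3 := exp_pair_le x y t s (delta3 α) ht.le hs.le hts
    simp only [sfun]; linarith
  · have p1 := exp_pair_le x y t s (delta1 α) ht.le hs.le hts
    have p2 := exp_pair_le x y t s (delta2 α) ht.le hs.le hts
    have p3 := exp_pair_lt x y t s (delta3 α) hxy h ht hs hts
    simp only [sfun]; linarith

lemma gfun_eq (a α l : ℝ) : gfun a α l = (1/6) * sfun α l - 1 + a := rfl

lemma gfun_conv (a α x y t s : ℝ) (hxy : x ≠ y) (ht : 0 < t) (hs : 0 < s) (hts : t + s = 1) :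
    gfun a α (t*x + s*y) < t * gfun a α x + s * gfun a α y := by
  have h := sfun_conv α x y t s hxy ht hs hts
  calc gfun a α (t*x + s*y) = (1/6) * sfun α (t*x + s*y) - 1 + a := rfl
    _ < (1/6) * (t * sfun α x + s * sfun α y) - 1 + a := by linarith
    _ = t * gfun a α x + s * gfun a α y := by
        simp only [gfun_eq]; linear_combination (1 - a) * hts

set_option maxHeartbeats 2000000 in
theorem stmt3 (α : ℝ) (f f' : ℝ → ℝ) (hf : FisherKPP f f')
    (N θ : ℝ) (hN : 0 ≤ N) (hθ : θ ∈ Set.Ioc (0:ℝ) 1)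
    (hH : ∀ s ∈ Set.Icc (0:ℝ) 1, f' 0 * s - N * s ^ (1 + θ) ≤ f s)
    (c l1 l2 : ℝ) (hc : cstar (f' 0) α < c)
    (hl1pos : 0 < l1) (hl12 : l1 < l2)
    (hroot1 : c * l1 = gfun (f' 0) α l1) (hroot2 : c * l2 = gfun (f' 0) α l2)
    (γ : ℝ) (hγ0 : 0 < γ) (hγ : γ < min (l1 * θ) (l2 - l1))
    (M : ℝ) (hM : max 1 (N / (c * (l1 + γ) - gfun (f' 0) α (l1 + γ))) ≤ M) :
    (∀ ξ : ℝ, 0 ≤ max 0 ((1 - M * Real.exp (γ * ξ)) * Real.exp (l1 * ξ)) ∧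
      max 0 ((1 - M * Real.exp (γ * ξ)) * Real.exp (l1 * ξ)) ≤ min 1 (Real.exp (l1 * ξ))) ∧
    (∀ ξ : ℝ, ξ ≠ -(Real.log M) / γ →
      c * deriv (fun ζ : ℝ => max 0 ((1 - M * Real.exp (γ * ζ)) * Real.exp (l1 * ζ))) ξ
        ≤ (1/6) * Dh α (fun ζ : ℝ => max 0 ((1 - M * Real.exp (γ * ζ)) * Real.exp (l1 * ζ))) ξ
          + f (max 0 ((1 - M * Real.exp (γ * ξ)) * Real.exp (l1 * ξ)))) := by
  have hθ0 : 0 < θ := hθ.1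
  have hγ1 : γ < l1 * θ := (lt_min_iff.mp hγ).1
  have hγ2 : γ < l2 - l1 := (lt_min_iff.mp hγ).2
  have hM1 : (1:ℝ) ≤ M := le_trans (le_max_left _ _) hM
  have hMpos : (0:ℝ) < M := by linarith
  have part1 : ∀ ξ : ℝ, 0 ≤ max 0 ((1 - M * Real.exp (γ * ξ)) * Real.exp (l1 * ξ)) ∧
      max 0 ((1 - M * Real.exp (γ * ξ)) * Real.exp (l1 * ξ)) ≤ min 1 (Real.exp (l1 * ξ)) := by
    intro ξ
    refine ⟨le_max_left _ _, le_min ?_ ?_⟩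
    · apply max_le zero_le_one
      rcases le_or_gt (1 - M * Real.exp (γ * ξ)) 0 with h | h
      · nlinarith [Real.exp_pos (l1 * ξ)]
      · have hE : Real.exp (γ * ξ) < 1 := by nlinarith [Real.exp_pos (γ * ξ)]
        have hξ : γ * ξ < 0 := Real.exp_lt_one_iff.mp hE
        have hξ0 : ξ < 0 := by nlinarith
        have hl : Real.exp (l1 * ξ) ≤ 1 := Real.exp_le_one_iff.mpr (by nlinarith)
        nlinarith [Real.exp_pos (l1 * ξ), Real.exp_pos (γ * ξ)]
    · apply max_le (Real.exp_pos _).le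
      nlinarith [mul_nonneg (mul_nonneg hMpos.le (Real.exp_pos (γ*ξ)).le) (Real.exp_pos (l1*ξ)).le]
  refine ⟨part1, ?_⟩
  intro ξ hξne
  have hlogM : 0 ≤ Real.log M := Real.log_nonneg hM1
  have hξ0le : -(Real.log M) / γ ≤ 0 := by
    rw [neg_div, neg_nonpos]
    positivity
  have hMexp : ∀ ζ : ℝ, M * Real.exp (γ * ζ) = Real.exp (γ * ζ + Real.log M) := by
    intro ζ; rw [Real.exp_add, Real.exp_log hMpos]; ring
  have hlt_iff : ∀ ζ : ℝ, ζ < -(Real.log M) / γ → M * Real.exp (γ * ζ) < 1 := by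
    intro ζ hζ
    rw [hMexp ζ, show (1:ℝ) = Real.exp 0 from Real.exp_zero.symm]
    apply Real.exp_lt_exp.mpr
    rw [lt_div_iff₀ hγ0] at hζ
    nlinarith
  rcases lt_or_gt_of_ne hξne with hξlt | hξgt
  · -- ξ < ξ₀ : the function agrees with ψ near ξ
    set a := f' 0 with ha
    have hξneg : ξ ≤ 0 := le_of_lt (lt_of_lt_of_le hξlt hξ0le)
    have hkey : ∀ ζ : ℝ, (1 - M * Real.exp (γ * ζ)) * Real.exp (l1 * ζ)
        = Real.exp (l1 * ζ) - M * Real.exp ((l1 + γ) * ζ) := by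
      intro ζ; rw [add_mul, Real.exp_add]; ring
    have hEqOn : Set.EqOn (fun ζ : ℝ => max 0 ((1 - M * Real.exp (γ * ζ)) * Real.exp (l1 * ζ)))
        (fun ζ : ℝ => Real.exp (l1 * ζ) - M * Real.exp ((l1 + γ) * ζ))
        (Set.Iio (-(Real.log M) / γ)) := by
      intro ζ hζ
      have h1 : M * Real.exp (γ * ζ) < 1 := hlt_iff ζ hζ
      have h2 : 0 ≤ (1 - M * Real.exp (γ * ζ)) * Real.exp (l1 * ζ) :=
        mul_nonneg (by linarith) (Real.exp_pos _).le
      simp only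
      rw [max_eq_right h2, hkey]
    have hev : (fun ζ : ℝ => max 0 ((1 - M * Real.exp (γ * ζ)) * Real.exp (l1 * ζ)))
        =ᶠ[nhds ξ] (fun ζ : ℝ => Real.exp (l1 * ζ) - M * Real.exp ((l1 + γ) * ζ)) :=
      Filter.eventuallyEq_of_mem (Iio_mem_nhds hξlt) hEqOn
    have hd1 : HasDerivAt (fun ζ : ℝ => Real.exp (l1 * ζ)) (Real.exp (l1 * ξ) * l1) ξ := by
      have h : HasDerivAt (fun ζ : ℝ => l1 * ζ) l1 ξ := by
        simpa using (hasDerivAt_id ξ).const_mul l1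
      exact h.exp
    have hd2 : HasDerivAt (fun ζ : ℝ => Real.exp ((l1 + γ) * ζ))
        (Real.exp ((l1 + γ) * ξ) * (l1 + γ)) ξ := by
      have h : HasDerivAt (fun ζ : ℝ => (l1 + γ) * ζ) (l1 + γ) ξ := by
        simpa using (hasDerivAt_id ξ).const_mul (l1 + γ)
      exact h.exp
    have hd : HasDerivAt (fun ζ : ℝ => Real.exp (l1 * ζ) - M * Real.exp ((l1 + γ) * ζ))
        (Real.exp (l1 * ξ) * l1 - M * (Real.exp ((l1 + γ) * ξ) * (l1 + γ))) ξ :=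
      hd1.sub (hd2.const_mul M)
    have hderiv : deriv (fun ζ : ℝ => max 0 ((1 - M * Real.exp (γ * ζ)) * Real.exp (l1 * ζ))) ξ
        = Real.exp (l1 * ξ) * l1 - M * (Real.exp ((l1 + γ) * ξ) * (l1 + γ)) := by
      rw [hev.deriv_eq, hd.deriv]
    have hUξ : max 0 ((1 - M * Real.exp (γ * ξ)) * Real.exp (l1 * ξ))
        = Real.exp (l1 * ξ) - M * Real.exp ((l1 + γ) * ξ) := hEqOn hξlt
    have hUge : ∀ ζ : ℝ, Real.exp (l1 * ζ) - M * Real.exp ((l1 + γ) * ζ)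
        ≤ max 0 ((1 - M * Real.exp (γ * ζ)) * Real.exp (l1 * ζ)) := fun ζ => by
      rw [← hkey]; exact le_max_right _ _
    have hDhge : Dh α (fun ζ : ℝ => Real.exp (l1 * ζ) - M * Real.exp ((l1 + γ) * ζ)) ξ
        ≤ Dh α (fun ζ : ℝ => max 0 ((1 - M * Real.exp (γ * ζ)) * Real.exp (l1 * ζ))) ξ := by
      simp only [Dh]
      linarith [hUge (ξ + delta1 α), hUge (ξ - delta1 α), hUge (ξ + delta2 α),
        hUge (ξ - delta2 α), hUge (ξ + delta3 α), hUge (ξ - delta3 α), hUξ]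
    have hDhψ : Dh α (fun ζ : ℝ => Real.exp (l1 * ζ) - M * Real.exp ((l1 + γ) * ζ)) ξ
        = 6 * (Real.exp (l1 * ξ) * (gfun a α l1 - a)
            - M * Real.exp ((l1 + γ) * ξ) * (gfun a α (l1 + γ) - a)) := by
      simp only [Dh, gfun, mul_add, mul_sub, Real.exp_add, Real.exp_sub, Real.exp_neg]
      ring
    -- positivity of c(l1+γ) - g(l1+γ)
    have hll : (0:ℝ) < l2 - l1 := by linarith
    have hs : 0 < γ / (l2 - l1) := div_pos hγ0 hll
    have hs1 : γ / (l2 - l1) < 1 := (div_lt_one hll).mpr hγ2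
    have hts : (1 - γ/(l2-l1)) + γ/(l2-l1) = 1 := by ring
    have hxyc : l1 + γ = (1 - γ/(l2-l1)) * l1 + (γ/(l2-l1)) * l2 := by
      field_simp
      ring
    have hconv := gfun_conv a α l1 l2 (1 - γ/(l2-l1)) (γ/(l2-l1)) (ne_of_lt hl12)
      (by linarith) hs hts
    rw [← hxyc] at hconv
    have hlin : (1 - γ/(l2-l1)) * (c*l1) + (γ/(l2-l1)) * (c*l2) = c * (l1+γ) := by
      field_simp; ring
    have hBc : 0 < c * (l1 + γ) - gfun a α (l1 + γ) := by
      rw [hroot1, hroot2] at hlin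
      linarith
    have hNB : N ≤ M * (c * (l1 + γ) - gfun a α (l1 + γ)) := by
      have h1 : N / (c * (l1 + γ) - gfun a α (l1 + γ)) ≤ M := le_trans (le_max_right _ _) hM
      exact (div_le_iff₀ hBc).mp h1
    -- lower bound for f
    have hmem : max 0 ((1 - M * Real.exp (γ * ξ)) * Real.exp (l1 * ξ)) ∈ Set.Icc (0:ℝ) 1 :=
      ⟨(part1 ξ).1, le_trans (part1 ξ).2 (min_le_left _ _)⟩
    have hflb := hH _ hmem
    have hUle : max 0 ((1 - M * Real.exp (γ * ξ)) * Real.exp (l1 * ξ)) ≤ Real.exp (l1 * ξ) :=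
      le_trans (part1 ξ).2 (min_le_right _ _)
    have hpow1 : (max 0 ((1 - M * Real.exp (γ * ξ)) * Real.exp (l1 * ξ))) ^ (1+θ)
        ≤ (Real.exp (l1*ξ)) ^ (1+θ) :=
      Real.rpow_le_rpow (part1 ξ).1 hUle (by linarith)
    have hpow2 : (Real.exp (l1*ξ)) ^ (1+θ) = Real.exp ((l1*ξ) * (1+θ)) := by
      rw [Real.rpow_def_of_pos (Real.exp_pos _), Real.log_exp]
    have hexple : Real.exp ((l1*ξ)*(1+θ)) ≤ Real.exp ((l1+γ)*ξ) := by
      apply Real.exp_le_exp.mpr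
      nlinarith [mul_nonneg (show (0:ℝ) ≤ l1*θ - γ by linarith) (neg_nonneg.mpr hξneg)]
    have hpowN : N * (max 0 ((1 - M * Real.exp (γ * ξ)) * Real.exp (l1 * ξ))) ^ (1+θ)
        ≤ N * Real.exp ((l1+γ)*ξ) := by
      apply mul_le_mul_of_nonneg_left _ hN
      calc (max 0 ((1 - M * Real.exp (γ * ξ)) * Real.exp (l1 * ξ))) ^ (1+θ)
          ≤ (Real.exp (l1*ξ)) ^ (1+θ) := hpow1
        _ = Real.exp ((l1*ξ) * (1+θ)) := hpow2
        _ ≤ Real.exp ((l1+γ)*ξ) := hexple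
    have hae : a * (max 0 ((1 - M * Real.exp (γ * ξ)) * Real.exp (l1 * ξ)))
        = a * (Real.exp (l1 * ξ) - M * Real.exp ((l1 + γ) * ξ)) := by rw [hUξ]
    have hflb2 : a * (Real.exp (l1 * ξ) - M * Real.exp ((l1 + γ) * ξ)) - N * Real.exp ((l1+γ)*ξ)
        ≤ f (max 0 ((1 - M * Real.exp (γ * ξ)) * Real.exp (l1 * ξ))) := by
      linarith [hflb, hpowN, hae]
    have hc1 : c * l1 * Real.exp (l1 * ξ) = gfun a α l1 * Real.exp (l1 * ξ) := by rw [hroot1]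
    have hc2 : N * Real.exp ((l1+γ)*ξ)
        ≤ M * (c * (l1 + γ) - gfun a α (l1 + γ)) * Real.exp ((l1+γ)*ξ) :=
      mul_le_mul_of_nonneg_right hNB (Real.exp_pos _).le
    rw [hderiv]
    linarith only [hDhge, hDhψ, hflb2, hc1, hc2]
  · -- ξ > ξ₀ : the function vanishes near ξ
    have hEqOn0 : Set.EqOn (fun ζ : ℝ => max 0 ((1 - M * Real.exp (γ * ζ)) * Real.exp (l1 * ζ)))
        (fun _ : ℝ => (0:ℝ)) (Set.Ioi (-(Real.log M) / γ)) := by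
      intro ζ hζ
      have h1 : 1 < M * Real.exp (γ * ζ) := by
        rw [hMexp ζ, show (1:ℝ) = Real.exp 0 from Real.exp_zero.symm]
        apply Real.exp_lt_exp.mpr
        have h2 : -(Real.log M) / γ < ζ := hζ
        rw [div_lt_iff₀ hγ0] at h2
        nlinarith
      simp only
      apply max_eq_left
      nlinarith [Real.exp_pos (l1 * ζ)]
    have hev : (fun ζ : ℝ => max 0 ((1 - M * Real.exp (γ * ζ)) * Real.exp (l1 * ζ)))
        =ᶠ[nhds ξ] (fun _ : ℝ => (0:ℝ)) :=
      Filter.eventuallyEq_of_mem (Ioi_mem_nhds hξgt) hEqOn0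
    have hderiv : deriv (fun ζ : ℝ => max 0 ((1 - M * Real.exp (γ * ζ)) * Real.exp (l1 * ζ))) ξ
        = 0 := by rw [hev.deriv_eq, deriv_const]
    have hUξ0 : max 0 ((1 - M * Real.exp (γ * ξ)) * Real.exp (l1 * ξ)) = 0 := hEqOn0 hξgt
    rw [hderiv, hUξ0, mul_zero, hf.2.2.1]
    simp only [Dh]
    have h1 := le_max_left 0 ((1 - M * Real.exp (γ * (ξ + delta1 α))) * Real.exp (l1 * (ξ + delta1 α)))
    have h2 := le_max_left 0 ((1 - M * Real.exp (γ * (ξ - delta1 α))) * Real.exp (l1 * (ξ - delta1 α)))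
    have h3 := le_max_left 0 ((1 - M * Real.exp (γ * (ξ + delta2 α))) * Real.exp (l1 * (ξ + delta2 α)))
    have h4 := le_max_left 0 ((1 - M * Real.exp (γ * (ξ - delta2 α))) * Real.exp (l1 * (ξ - delta2 α)))
    have h5 := le_max_left 0 ((1 - M * Real.exp (γ * (ξ + delta3 α))) * Real.exp (l1 * (ξ + delta3 α)))
    have h6 := le_max_left 0 ((1 - M * Real.exp (γ * (ξ - delta3 α))) * Real.exp (l1 * (ξ - delta3 α)))
    linarith [hUξ0]
end

section
/- (Nonexistence below the minimal speed, necessity.) Assume the Fisher-KPP conditions. If there exists a traveling wave U with speed c — i.e., a continuously differentiable U : ℝ → [0,1] with c·U′(ξ) = (1/6)·𝒟_h[U](ξ) + f(U(ξ)) for all ξ, lim_{ξ→−∞} U(ξ) = 0 and lim_{ξ→+∞} U(ξ) = 1 — then c ≥ c*(α). -/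
open Real Set Filter

lemma two_le_exp_add (y : ℝ) : 2 ≤ Real.exp y + Real.exp (-y) := by
  have h1 := Real.exp_pos y
  have h2 : Real.exp (-y) = 1 / Real.exp y := by
    rw [Real.exp_neg]; ring
  rw [h2]
  rw [div_eq_inv_mul, mul_one] at *
  nlinarith [sq_nonneg (Real.exp y - 1), mul_pos h1 h1, mul_inv_cancel₀ (ne_of_gt h1)]

lemma tendsto_sin_mul_div (δ : ℝ) :
    Tendsto (fun ν : ℝ => Real.sin (ν * δ) / ν) (nhdsWithin 0 (Set.Ioi 0)) (nhds δ) := by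
  have h : HasDerivAt (fun ν : ℝ => Real.sin (ν * δ)) δ 0 := by
    have h1 : HasDerivAt (fun ν : ℝ => ν * δ) δ 0 := by
      simpa using (hasDerivAt_id (0:ℝ)).mul_const δ
    have := h1.sin
    simpa using this
  have h2 := hasDerivAt_iff_tendsto_slope.mp h
  have h3 : Tendsto (slope (fun ν : ℝ => Real.sin (ν * δ)) 0) (nhdsWithin 0 (Set.Ioi 0)) (nhds δ) :=
    h2.mono_left (nhdsWithin_mono _ (fun x hx => ne_of_gt hx))
  refine h3.congr' ?_
  filter_upwards [eventually_mem_nhdsWithin] with x hx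
  rw [slope_def_field]
  simp

lemma term_nonneg (δ μ : ℝ) (hμ : 0 ≤ μ) : 0 ≤ δ * (Real.exp (μ * δ) - Real.exp (-(μ * δ))) := by
  rcases le_or_gt 0 δ with h | h
  · apply mul_nonneg h
    have h1 : -(μ*δ) ≤ μ*δ := by nlinarith
    have := Real.exp_le_exp.mpr h1
    linarith
  · have h1 : μ*δ ≤ -(μ*δ) := by nlinarith
    have := Real.exp_le_exp.mpr h1
    nlinarith

set_option maxHeartbeats 2000000 in
lemma key (d1 d2 d3 : ℝ) (hsum : d1^2 + d2^2 + d3^2 = 3/2)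
    (f f' : ℝ → ℝ) (hfd0 : HasDerivAt f (f' 0) 0) (hf0 : f 0 = 0) (ha : 0 < f' 0)
    (c : ℝ) (U : ℝ → ℝ) (hC : ContDiff ℝ 1 U) (hU0 : ∀ ξ, 0 ≤ U ξ)
    (heq : ∀ ξ, c * deriv U ξ =
      (1/6) * ((U (ξ + d1) + U (ξ - d1)) + (U (ξ + d2) + U (ξ - d2))
        + (U (ξ + d3) + U (ξ - d3)) - 6 * U ξ) + f (U ξ))
    (hbot : Tendsto U atBot (nhds 0)) (htop : Tendsto U atTop (nhds 1))
    (H : ∀ l : ℝ, 0 < l → c * l <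
      (1/6) * ((Real.exp (l * d1) + Real.exp (-(l * d1)))
        + (Real.exp (l * d2) + Real.exp (-(l * d2)))
        + (Real.exp (l * d3) + Real.exp (-(l * d3)))) - 1 + f' 0) : False := by
  set a := f' 0 with ha_def
  have hUd : Differentiable ℝ U := hC.differentiable one_ne_zero
  have hUc : Continuous U := hUd.continuous
  -- bounds on the shifts
  have habs1 : |d1| ≤ 2 := by
    nlinarith [sq_abs d1, sq_nonneg d2, sq_nonneg d3, abs_nonneg d1, sq_nonneg (|d1| - 2)]
  have habs2 : |d2| ≤ 2 := by
    nlinarith [sq_abs d2, sq_nonneg d1, sq_nonneg d3, abs_nonneg d2, sq_nonneg (|d2| - 2)]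
  have habs3 : |d3| ≤ 2 := by
    nlinarith [sq_abs d3, sq_nonneg d1, sq_nonneg d2, abs_nonneg d3, sq_nonneg (|d3| - 2)]
  -- some shift is nonzero
  obtain ⟨δ0, hδ0mem, hδ0⟩ : ∃ δ0 : ℝ, (δ0 = d1 ∨ δ0 = d2 ∨ δ0 = d3) ∧ δ0 ≠ 0 := by
    by_contra hno
    push_neg at hno
    have h1 : d1 = 0 := hno d1 (Or.inl rfl)
    have h2 : d2 = 0 := hno d2 (Or.inr (Or.inl rfl))
    have h3 : d3 = 0 := hno d3 (Or.inr (Or.inr rfl))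
    rw [h1, h2, h3] at hsum
    norm_num at hsum
  have hd0 : 0 < |δ0| := abs_pos.mpr hδ0
  -- positivity of U
  have hZero : ∀ ξ, U ξ = 0 → U (ξ + |δ0|) = 0 := by
    intro ξ hξ
    have hmin : IsLocalMin U ξ := Filter.Eventually.of_forall (fun t => by rw [hξ]; exact hU0 t)
    have hder : deriv U ξ = 0 := hmin.deriv_eq_zero
    have he := heq ξ
    rw [hder, hξ, hf0] at he
    have l1 := hU0 (ξ + d1); have l2 := hU0 (ξ - d1)
    have l3 := hU0 (ξ + d2); have l4 := hU0 (ξ - d2)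
    have l5 := hU0 (ξ + d3); have l6 := hU0 (ξ - d3)
    have hz : U (ξ + δ0) = 0 ∧ U (ξ - δ0) = 0 := by
      rcases hδ0mem with rfl | rfl | rfl <;> constructor <;> linarith
    rcases abs_cases δ0 with ⟨h, _⟩ | ⟨h, _⟩
    · rw [h]; exact hz.1
    · rw [h]; simpa [sub_eq_add_neg] using hz.2
  have hUpos : ∀ ξ, 0 < U ξ := by
    intro ξ
    rcases (hU0 ξ).lt_or_eq with h | h
    · exact h
    · exfalso
      have hn : ∀ n : ℕ, U (ξ + n * |δ0|) = 0 := by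
        intro n
        induction n with
        | zero => simpa using h.symm
        | succ k ih =>
          have h2 := hZero _ ih
          have h3 : ξ + ((k:ℕ)+1 : ℕ) * |δ0| = (ξ + (k:ℕ) * |δ0|) + |δ0| := by push_cast; ring
          rw [h3]; exact h2
      have hseq : Tendsto (fun n : ℕ => ξ + n * |δ0|) atTop atTop := by
        apply tendsto_atTop_add_const_left
        exact tendsto_natCast_atTop_atTop.atTop_mul_const' hd0
      have h1 : Tendsto (fun n : ℕ => U (ξ + n * |δ0|)) atTop (nhds 1) := htop.comp hseq
      have h0 : Tendsto (fun n : ℕ => U (ξ + n * |δ0|)) atTop (nhds 0) := by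
        simp only [hn]; exact tendsto_const_nhds
      exact one_ne_zero (tendsto_nhds_unique h1 h0)
  -- choice of μ
  set Q' : ℝ → ℝ := fun μ => (1/6) * (d1 * (Real.exp (μ*d1) - Real.exp (-(μ*d1)))
      + d2 * (Real.exp (μ*d2) - Real.exp (-(μ*d2))) + d3 * (Real.exp (μ*d3) - Real.exp (-(μ*d3)))) with hQ'def
  set Qr : ℝ → ℝ := fun μ => (1/6) * ((Real.exp (μ*d1) + Real.exp (-(μ*d1)))
      + (Real.exp (μ*d2) + Real.exp (-(μ*d2))) + (Real.exp (μ*d3) + Real.exp (-(μ*d3)))) - 1 with hQrdef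
  set φ : ℝ → ℝ := fun μ => Qr μ + a - μ * Q' μ with hφdef
  have hQ'cont : Continuous Q' := by rw [hQ'def]; fun_prop
  have hQrcont : Continuous Qr := by rw [hQrdef]; fun_prop
  have hφcont : Continuous φ := by
    rw [hφdef]
    exact (hQrcont.add continuous_const).sub (continuous_id.mul hQ'cont)
  have H' : ∀ l : ℝ, 0 < l → c * l < Qr l + a := by
    intro l hl
    have h1 := H l hl
    simp only [hQrdef]
    linarith
  have hφ0 : φ 0 = a := by
    simp only [hφdef, hQrdef, hQ'def]
    norm_num
  obtain ⟨μ, hμpos, hcμ, hφμ⟩ : ∃ μ : ℝ, 0 < μ ∧ c < Q' μ ∧ 0 < φ μ := by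
    set X := 6*(|c|+1)/|δ0| with hX
    have hXpos : 0 < X := by positivity
    set μ1 := Real.log (1 + X) / |δ0| with hμ1
    have hμ1pos : 0 < μ1 := div_pos (Real.log_pos (by linarith)) hd0
    have hexp1 : Real.exp (μ1 * |δ0|) = 1 + X := by
      rw [hμ1, div_mul_cancel₀ _ (ne_of_gt hd0)]
      exact Real.exp_log (by linarith)
    have hexpneg1 : Real.exp (-(μ1 * |δ0|)) ≤ 1 := by
      rw [← Real.exp_zero]
      apply Real.exp_le_exp.mpr
      nlinarith
    have habs0 : δ0 * (Real.exp (μ1*δ0) - Real.exp (-(μ1*δ0)))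
        = |δ0| * (Real.exp (μ1*|δ0|) - Real.exp (-(μ1*|δ0|))) := by
      rcases abs_cases δ0 with ⟨h, _⟩ | ⟨h, _⟩
      · rw [h]
      · rw [h, show μ1 * -δ0 = -(μ1*δ0) by ring, neg_neg]; ring
    have hterm : 6*(|c|+1) ≤ δ0 * (Real.exp (μ1*δ0) - Real.exp (-(μ1*δ0))) := by
      rw [habs0, hexp1]
      have h1 : |δ0| * X = 6*(|c|+1) := by rw [hX]; field_simp
      nlinarith [mul_nonneg hd0.le (sub_nonneg.mpr hexpneg1)]
    have ht1 := term_nonneg d1 μ1 hμ1pos.le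
    have ht2 := term_nonneg d2 μ1 hμ1pos.le
    have ht3 := term_nonneg d3 μ1 hμ1pos.le
    have hc1 : c ≤ |c| := le_abs_self c
    have hQ'μ1 : c < Q' μ1 := by
      simp only [hQ'def]
      rcases hδ0mem with h | h | h <;> rw [h] at hterm <;> linarith
    by_cases hφ1 : 0 < φ μ1
    · exact ⟨μ1, hμ1pos, hQ'μ1, hφ1⟩
    · set Z := Icc (0:ℝ) μ1 ∩ {μ | φ μ ≤ 0} with hZdef
      have hZc : IsClosed Z := isClosed_Icc.inter (isClosed_le hφcont continuous_const)
      have hZne : Z.Nonempty := ⟨μ1, ⟨hμ1pos.le, le_rfl⟩, not_lt.mp hφ1⟩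
      have hZbdd : BddBelow Z := ⟨0, fun z hz => hz.1.1⟩
      have hmem : sInf Z ∈ Z := hZc.csInf_mem hZne hZbdd
      have hφμh : φ (sInf Z) ≤ 0 := hmem.2
      have hμhpos : 0 < sInf Z := by
        rcases hmem.1.1.lt_or_eq with h | h
        · exact h
        · exfalso; rw [← h] at hφμh; rw [hφ0] at hφμh; linarith
      have hH := H' (sInf Z) hμhpos
      have hQ'μh : c < Q' (sInf Z) := by
        have h1 : Qr (sInf Z) + a ≤ (sInf Z) * Q' (sInf Z) := by
          have h2 := hφμh
          rw [hφdef] at h2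
          simp only at h2
          linarith
        have h2 : (sInf Z) * c < (sInf Z) * Q' (sInf Z) := by
          calc (sInf Z) * c = c * (sInf Z) := by ring
            _ < Qr (sInf Z) + a := hH
            _ ≤ _ := h1
        exact (mul_lt_mul_iff_right₀ hμhpos).mp h2
      have hev : ∀ᶠ μ in nhds (sInf Z), c < Q' μ :=
        (hQ'cont.continuousAt).eventually_const_lt hQ'μh
      obtain ⟨η, hη, hball⟩ := Metric.eventually_nhds_iff.mp hev
      have hmax_lt : max (sInf Z / 2) (sInf Z - η/2) < sInf Z := max_lt (by linarith) (by linarith)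
      have hmax_ge : sInf Z - η/2 ≤ max (sInf Z / 2) (sInf Z - η/2) := le_max_right _ _
      refine ⟨max (sInf Z / 2) (sInf Z - η/2), ?_, ?_, ?_⟩
      · exact lt_max_of_lt_left (by linarith)
      · apply hball
        rw [Real.dist_eq, abs_of_nonpos (by linarith)]
        linarith
      · by_contra hφc
        push_neg at hφc
        have hmZ : max (sInf Z / 2) (sInf Z - η/2) ∈ Z := by
          refine ⟨⟨?_, ?_⟩, hφc⟩
          · have := le_max_left (sInf Z / 2) (sInf Z - η/2); linarith
          · have := hmem.1.2; linarith
        have := csInf_le hZbdd hmZ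
        linarith
  -- choice of ν
  obtain ⟨M1, hM1⟩ : ∃ x : ℝ, x = Real.exp (μ*d1) - Real.exp (-(μ*d1)) := ⟨_, rfl⟩
  obtain ⟨M2, hM2⟩ : ∃ x : ℝ, x = Real.exp (μ*d2) - Real.exp (-(μ*d2)) := ⟨_, rfl⟩
  obtain ⟨M3, hM3⟩ : ∃ x : ℝ, x = Real.exp (μ*d3) - Real.exp (-(μ*d3)) := ⟨_, rfl⟩
  obtain ⟨P1, hP1⟩ : ∃ x : ℝ, x = Real.exp (μ*d1) + Real.exp (-(μ*d1)) := ⟨_, rfl⟩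
  obtain ⟨P2, hP2⟩ : ∃ x : ℝ, x = Real.exp (μ*d2) + Real.exp (-(μ*d2)) := ⟨_, rfl⟩
  obtain ⟨P3, hP3⟩ : ∃ x : ℝ, x = Real.exp (μ*d3) + Real.exp (-(μ*d3)) := ⟨_, rfl⟩
  obtain ⟨ν, hν0, hνle, hν1, hν2⟩ : ∃ ν : ℝ, 0 < ν ∧ ν < 1 ∧
      c < (1/6) * (M1 * (Real.sin (ν*d1)/ν) + M2 * (Real.sin (ν*d2)/ν) + M3 * (Real.sin (ν*d3)/ν)) ∧
      0 < (1/6) * (P1 * Real.cos (ν*d1) + P2 * Real.cos (ν*d2) + P3 * Real.cos (ν*d3)) - 1 + a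
        - ((1/6) * (M1 * (Real.sin (ν*d1)/ν) + M2 * (Real.sin (ν*d2)/ν) + M3 * (Real.sin (ν*d3)/ν))) * μ := by
    have hlim1 : Tendsto (fun ν : ℝ => (1/6) * (M1 * (Real.sin (ν*d1)/ν) + M2 * (Real.sin (ν*d2)/ν)
        + M3 * (Real.sin (ν*d3)/ν))) (nhdsWithin 0 (Set.Ioi 0)) (nhds (Q' μ)) := by
      have hval : Q' μ = (1/6) * (M1 * d1 + M2 * d2 + M3 * d3) := by
        simp only [hQ'def, hM1, hM2, hM3]; ring
      rw [hval]
      exact ((((tendsto_sin_mul_div d1).const_mul M1).add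
        ((tendsto_sin_mul_div d2).const_mul M2)).add
        ((tendsto_sin_mul_div d3).const_mul M3)).const_mul (1/6)
    have hlim2 : Tendsto (fun ν : ℝ => (1/6) * (P1 * Real.cos (ν*d1) + P2 * Real.cos (ν*d2)
        + P3 * Real.cos (ν*d3)) - 1 + a
        - ((1/6) * (M1 * (Real.sin (ν*d1)/ν) + M2 * (Real.sin (ν*d2)/ν) + M3 * (Real.sin (ν*d3)/ν))) * μ)
        (nhdsWithin 0 (Set.Ioi 0)) (nhds (φ μ)) := by
      have hcos : ∀ d : ℝ, Tendsto (fun ν : ℝ => Real.cos (ν*d)) (nhdsWithin 0 (Set.Ioi 0)) (nhds 1) := by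
        intro d
        have hcont : Continuous (fun ν : ℝ => Real.cos (ν*d)) := by fun_prop
        have h2 := hcont.continuousAt (x := 0)
        have h3 := h2.mono_left (nhdsWithin_le_nhds (s := Set.Ioi (0:ℝ)))
        simpa using h3
      have hval : φ μ = (1/6) * (P1 * 1 + P2 * 1 + P3 * 1) - 1 + a - Q' μ * μ := by
        simp only [hφdef, hQrdef, hP1, hP2, hP3]; ring
      rw [hval]
      exact (((((((hcos d1).const_mul P1).add ((hcos d2).const_mul P2)).add
        ((hcos d3).const_mul P3)).const_mul (1/6)).sub_const 1).add_const a).sub (hlim1.mul_const μ)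
    have hev1 := hlim1.eventually_const_lt hcμ
    have hev2 := hlim2.eventually_const_lt hφμ
    have hev3 : ∀ᶠ ν in nhdsWithin 0 (Set.Ioi 0), ν ∈ Set.Ioo (0:ℝ) 1 :=
      Ioo_mem_nhdsGT_of_mem ⟨le_rfl, one_pos⟩
    obtain ⟨ν, h1, h2, h3⟩ := (hev1.and (hev2.and hev3)).exists
    exact ⟨ν, h3.1, h3.2, h1, h2⟩
  obtain ⟨cp, hcpdef⟩ : ∃ x : ℝ, x = (1/6) * (M1 * (Real.sin (ν*d1)/ν) + M2 * (Real.sin (ν*d2)/ν) + M3 * (Real.sin (ν*d3)/ν)) := ⟨_, rfl⟩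
  obtain ⟨κ, hκdef⟩ : ∃ x : ℝ, x = (1/6) * (P1 * Real.cos (ν*d1) + P2 * Real.cos (ν*d2) + P3 * Real.cos (ν*d3)) - 1 + a - cp * μ := ⟨_, rfl⟩
  have hccp : c < cp := by rw [hcpdef]; exact hν1
  have hκpos : 0 < κ := by rw [hκdef, hcpdef]; exact hν2
  obtain ⟨σ, hσdef⟩ : ∃ x : ℝ, x = cp - c := ⟨_, rfl⟩
  have hσ : 0 < σ := by rw [hσdef]; exact sub_pos.mpr hccp
  -- the complex rate
  obtain ⟨Λ, hΛ⟩ : ∃ x : ℂ, x = (⟨μ, ν⟩ : ℂ) := ⟨_, rfl⟩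
  have hΛre : Λ.re = μ := by rw [hΛ]
  have hΛim : Λ.im = ν := by rw [hΛ]
  obtain ⟨W, hWdef⟩ : ∃ g : ℝ → ℝ, g = fun y : ℝ => (Complex.exp (Λ * (y:ℂ))).im := ⟨_, rfl⟩
  have hW_eq : ∀ y : ℝ, W y = Real.exp (μ*y) * Real.sin (ν*y) := by
    intro y
    simp only [hWdef, Complex.exp_im, Complex.mul_re, Complex.mul_im, Complex.ofReal_re,
      Complex.ofReal_im, hΛre, hΛim, mul_zero, sub_zero, zero_add, add_zero, zero_mul]
  have hWcont : Continuous W := by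
    rw [hWdef]
    apply Complex.continuous_im.comp
    apply Complex.continuous_exp.comp
    fun_prop
  have hWder : ∀ y : ℝ, HasDerivAt W ((Complex.exp (Λ*(y:ℂ)) * Λ).im) y := by
    intro y
    have h0 : HasDerivAt (fun x : ℝ => (x:ℂ)) 1 y := by
      simpa using (hasDerivAt_id y).ofReal_comp
    have h1 : HasDerivAt (fun x : ℝ => Λ * (x:ℂ)) Λ y := by
      simpa using h0.const_mul Λ
    have h2 := h1.cexp
    have h3 := Complex.imCLM.hasFDerivAt.comp_hasDerivAt y h2
    simpa [hWdef, Function.comp_def] using h3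
  -- characteristic identity
  have hcp6 : cp * (6*ν) = M1 * Real.sin (ν*d1) + M2 * Real.sin (ν*d2) + M3 * Real.sin (ν*d3) := by
    rw [hcpdef]
    have hν' : ν ≠ 0 := ne_of_gt hν0
    field_simp
  have hκe : κ = (1/6) * (P1 * Real.cos (ν*d1) + P2 * Real.cos (ν*d2) + P3 * Real.cos (ν*d3))
      - 1 + a - cp * μ := hκdef
  have CKey : ((1/6 : ℝ) : ℂ) * ((Complex.exp (Λ*(d1:ℂ)) + Complex.exp (-(Λ*(d1:ℂ))))
      + (Complex.exp (Λ*(d2:ℂ)) + Complex.exp (-(Λ*(d2:ℂ))))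
      + (Complex.exp (Λ*(d3:ℂ)) + Complex.exp (-(Λ*(d3:ℂ))))) - 1 + ((a - κ : ℝ) : ℂ)
      = ((cp : ℝ) : ℂ) * Λ := by
    apply Complex.ext
    · simp only [Complex.add_re, Complex.sub_re, Complex.mul_re, Complex.mul_im,
        Complex.ofReal_re, Complex.ofReal_im, Complex.one_re, Complex.neg_re, Complex.neg_im,
        Complex.exp_re, hΛre, hΛim, mul_zero, sub_zero, zero_mul, add_zero, zero_add,
        Real.cos_neg, Real.sin_neg]
      rw [hκe, hP1, hP2, hP3]
      ring
    · simp only [Complex.add_im, Complex.sub_im, Complex.mul_re, Complex.mul_im,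
        Complex.ofReal_re, Complex.ofReal_im, Complex.one_im, Complex.neg_re, Complex.neg_im,
        Complex.exp_im, hΛre, hΛim, mul_zero, sub_zero, zero_mul, add_zero, zero_add,
        Real.cos_neg, Real.sin_neg]
      rw [hM1, hM2, hM3] at hcp6
      linarith [hcp6]
  have WId : ∀ x : ℝ,
      (1/6) * ((W (x + d1) + W (x - d1)) + (W (x + d2) + W (x - d2)) + (W (x + d3) + W (x - d3)))
        - W x + (a - κ) * W x = cp * ((Complex.exp (Λ*(x:ℂ)) * Λ).im) := by
    intro x
    have e1 : ∀ δ : ℝ, Complex.exp (Λ*((x + δ : ℝ):ℂ)) = Complex.exp (Λ*(x:ℂ)) * Complex.exp (Λ*(δ:ℂ)) := by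
      intro δ
      rw [← Complex.exp_add]
      congr 1
      push_cast
      ring
    have e2 : ∀ δ : ℝ, Complex.exp (Λ*((x - δ : ℝ):ℂ)) = Complex.exp (Λ*(x:ℂ)) * Complex.exp (-(Λ*(δ:ℂ))) := by
      intro δ
      rw [← Complex.exp_add]
      congr 1
      push_cast
      ring
    have hCx : ((1/6 : ℝ):ℂ) * ((Complex.exp (Λ*((x+d1:ℝ):ℂ)) + Complex.exp (Λ*((x-d1:ℝ):ℂ)))
        + (Complex.exp (Λ*((x+d2:ℝ):ℂ)) + Complex.exp (Λ*((x-d2:ℝ):ℂ)))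
        + (Complex.exp (Λ*((x+d3:ℝ):ℂ)) + Complex.exp (Λ*((x-d3:ℝ):ℂ))))
        - Complex.exp (Λ*(x:ℂ)) + ((a - κ : ℝ):ℂ) * Complex.exp (Λ*(x:ℂ))
        = ((cp:ℝ):ℂ) * (Complex.exp (Λ*(x:ℂ)) * Λ) := by
      rw [e1 d1, e2 d1, e1 d2, e2 d2, e1 d3, e2 d3]
      linear_combination Complex.exp (Λ*(x:ℂ)) * CKey
    have him := congrArg Complex.im hCx
    simp only [Complex.add_im, Complex.sub_im, Complex.mul_im, Complex.mul_re,
      Complex.ofReal_re, Complex.ofReal_im, zero_mul, add_zero, mul_zero] at him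
    simp only [hWdef]
    rw [Complex.mul_im]
    linarith [him]
  -- slope of f near 0
  obtain ⟨θ, hθpos, hθ⟩ : ∃ θ : ℝ, 0 < θ ∧ ∀ s : ℝ, 0 < s → s ≤ θ → (a - κ)*s < f s := by
    have hslope : Tendsto (fun s => f s / s) (nhdsWithin 0 (Set.Ioi 0)) (nhds a) := by
      have h2 := hasDerivAt_iff_tendsto_slope.mp hfd0
      have h3 := h2.mono_left (nhdsWithin_mono _ (fun x hx => ne_of_gt hx))
      refine h3.congr' ?_
      filter_upwards [eventually_mem_nhdsWithin] with s hs
      rw [slope_def_field, hf0]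
      simp
    have hev := hslope.eventually_const_lt (by linarith : a - κ < a)
    rw [eventually_nhdsWithin_iff] at hev
    obtain ⟨ε', hε', hball⟩ := Metric.eventually_nhds_iff.mp hev
    refine ⟨ε'/2, by linarith, ?_⟩
    intro s hs0 hsle
    have h1 : a - κ < f s / s :=
      hball (by rw [Real.dist_eq, sub_zero, abs_of_pos hs0]; linarith) hs0
    calc (a - κ) * s < (f s / s) * s := by exact (mul_lt_mul_iff_left₀ hs0).mpr h1
      _ = f s := by field_simp
  -- the geometric frame
  have hπ3 := Real.pi_gt_three
  obtain ⟨L, hLdef⟩ : ∃ x : ℝ, x = Real.pi / ν := ⟨_, rfl⟩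
  have hL3 : 3 < L := by
    rw [hLdef, lt_div_iff₀ hν0]
    nlinarith
  have hLpos : 0 < L := by linarith
  have hνL : ν * L = Real.pi := by
    rw [hLdef]
    field_simp
  obtain ⟨ξm, hξmK, hξmmin⟩ := isCompact_Icc.exists_isMinOn
    (⟨0, le_rfl, hLpos.le⟩ : (Icc (0:ℝ) L).Nonempty) hUc.continuousOn
  have humpos : 0 < U ξm := hUpos ξm
  obtain ⟨Wmax, hWmaxdef⟩ : ∃ x : ℝ, x = Real.exp (abs μ * L) := ⟨_, rfl⟩
  have hWmaxpos : 0 < Wmax := by rw [hWmaxdef]; exact Real.exp_pos _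
  have hWle : ∀ x ∈ Icc (0:ℝ) L, W x ≤ Wmax := by
    intro x hx
    rw [hW_eq, hWmaxdef]
    have h1 : Real.exp (μ*x) * Real.sin (ν*x) ≤ Real.exp (μ*x) := by
      nlinarith [Real.sin_le_one (ν*x), Real.exp_pos (μ*x)]
    have h2 : Real.exp (μ*x) ≤ Real.exp (abs μ * L) := by
      apply Real.exp_le_exp.mpr
      have h3 : μ*x ≤ abs μ * x := mul_le_mul_of_nonneg_right (le_abs_self μ) hx.1
      have h4 : abs μ * x ≤ abs μ * L := mul_le_mul_of_nonneg_left hx.2 (abs_nonneg μ)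
      linarith
    linarith
  obtain ⟨ε, hεdef⟩ : ∃ x : ℝ, x = min θ (U ξm/2) / Wmax := ⟨_, rfl⟩
  have hεpos : 0 < ε := by
    rw [hεdef]
    exact div_pos (lt_min hθpos (by linarith)) hWmaxpos
  have hεW : ∀ x ∈ Icc (0:ℝ) L, ε * W x ≤ min θ (U ξm/2) := by
    intro x hx
    rcases le_or_gt (W x) 0 with h | h
    · have h1 : ε * W x ≤ 0 := mul_nonpos_iff.mpr (Or.inl ⟨hεpos.le, h⟩)
      have h2 : (0:ℝ) < min θ (U ξm/2) := lt_min hθpos (by linarith)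
      linarith
    · calc ε * W x ≤ ε * Wmax := mul_le_mul_of_nonneg_left (hWle x hx) hεpos.le
        _ = min θ (U ξm/2) := by rw [hεdef]; field_simp
  have hinit : ∀ x ∈ Icc (0:ℝ) L, ε * W x < U x := by
    intro x hx
    have h1 := hεW x hx
    have h2 : min θ (U ξm/2) ≤ U ξm/2 := min_le_right _ _
    have h3 : U ξm ≤ U x := hξmmin hx
    linarith
  -- the touching-time set
  obtain ⟨A, hAdef⟩ : ∃ S : Set ℝ, S = Ici (0:ℝ) ∩ {t | ∃ x ∈ Icc (0:ℝ) L, U (-σ*t + x) ≤ ε * W x} := ⟨_, rfl⟩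
  have hAclosed : IsClosed A := by
    rw [hAdef]
    apply isClosed_Ici.inter
    haveI : CompactSpace (Icc (0:ℝ) L) := isCompact_iff_compactSpace.mp isCompact_Icc
    have himg : {t : ℝ | ∃ x ∈ Icc (0:ℝ) L, U (-σ*t + x) ≤ ε * W x}
        = Prod.fst '' {p : ℝ × (Icc (0:ℝ) L) | U (-σ*p.1 + (p.2:ℝ)) - ε * W (p.2:ℝ) ≤ 0} := by
      ext t
      constructor
      · rintro ⟨x, hxK, hx⟩
        exact ⟨(t, ⟨x, hxK⟩), by simpa using (by linarith : U (-σ*t+x) - ε*W x ≤ 0), rfl⟩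
      · rintro ⟨⟨t', x⟩, hp, rfl⟩
        refine ⟨(x:ℝ), x.2, ?_⟩
        simp only [mem_setOf_eq] at hp
        linarith
    rw [himg]
    apply isClosedMap_fst_of_compactSpace
    apply isClosed_le ?_ continuous_const
    apply Continuous.sub
    · exact hUc.comp ((continuous_const.mul continuous_fst).add (continuous_subtype_val.comp continuous_snd))
    · exact continuous_const.mul (hWcont.comp (continuous_subtype_val.comp continuous_snd))
  by_cases hA : A.Nonempty
  · -- touching case
    have hAbdd : BddBelow A := ⟨0, fun t ht => by rw [hAdef] at ht; exact ht.1⟩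
    have ht₀mem : sInf A ∈ A := hAclosed.csInf_mem hA hAbdd
    obtain ⟨t₀, ht₀⟩ : ∃ x : ℝ, x = sInf A := ⟨_, rfl⟩
    rw [← ht₀, hAdef] at ht₀mem
    obtain ⟨ht₀0, x₀, hx₀K, hx₀le⟩ := ht₀mem
    have hpre : ∀ t, 0 ≤ t → t < t₀ → ∀ x ∈ Icc (0:ℝ) L, ε * W x < U (-σ*t + x) := by
      intro t ht htlt x hx
      by_contra hcontra
      push_neg at hcontra
      have hmem : t ∈ A := by rw [hAdef]; exact ⟨ht, x, hx, hcontra⟩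
      have h2 := csInf_le hAbdd hmem
      rw [← ht₀] at h2
      linarith only [h2, htlt]
    have ht₀pos : 0 < t₀ := by
      rcases (show (0:ℝ) ≤ t₀ from ht₀0).lt_or_eq with h | h
      · exact h
      · exfalso
        have h2 := hinit x₀ hx₀K
        rw [← h, show -σ*0 + x₀ = x₀ by ring] at hx₀le
        linarith only [h2, hx₀le]
    have hge : ∀ x ∈ Icc (0:ℝ) L, ε * W x ≤ U (-σ*t₀ + x) := by
      intro x hx
      have hcont : Continuous (fun t : ℝ => U (-σ*t + x)) := by fun_prop
      have htd : Tendsto (fun t : ℝ => U (-σ*t + x)) (nhdsWithin t₀ (Iio t₀))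
          (nhds (U (-σ*t₀ + x))) := (hcont.continuousAt).mono_left nhdsWithin_le_nhds
      apply ge_of_tendsto htd
      filter_upwards [Ioo_mem_nhdsLT_of_mem (⟨ht₀pos, le_rfl⟩ : t₀ ∈ Ioc 0 t₀)] with t htI
      exact (hpre t htI.1.le htI.2 x hx).le
    have hUW : U (-σ*t₀ + x₀) = ε * W x₀ := le_antisymm hx₀le (hge x₀ hx₀K)
    have hWx₀pos : 0 < W x₀ := by
      nlinarith only [hεpos, hUpos (-σ*t₀ + x₀), hUW]
    have hsin₀ : 0 < Real.sin (ν*x₀) := by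
      nlinarith only [Real.exp_pos (μ*x₀), hW_eq x₀, hWx₀pos]
    have hx₀pos : 0 < x₀ := by
      rcases hx₀K.1.lt_or_eq with h | h
      · exact h
      · exfalso; rw [← h] at hsin₀; simp at hsin₀
    have hx₀L : x₀ < L := by
      rcases hx₀K.2.lt_or_eq with h | h
      · exact h
      · exfalso; rw [h, hνL] at hsin₀; simp at hsin₀
    have hd1 : HasDerivAt (fun x : ℝ => U (-σ*t₀ + x) - ε * W x)
        (deriv U (-σ*t₀ + x₀) * 1 - ε * ((Complex.exp (Λ*(x₀:ℂ)) * Λ).im)) x₀ := by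
      apply HasDerivAt.sub
      · have hin : HasDerivAt (fun x : ℝ => -σ*t₀ + x) 1 x₀ := (hasDerivAt_id x₀).const_add (-σ*t₀)
        have h2 := HasDerivAt.comp x₀ (hUd (-σ*t₀ + x₀)).hasDerivAt hin
        simpa [Function.comp_def] using h2
      · exact (hWder x₀).const_mul ε
    have hlocmin : IsLocalMin (fun x : ℝ => U (-σ*t₀ + x) - ε * W x) x₀ := by
      have hmem : Icc (0:ℝ) L ∈ nhds x₀ := Icc_mem_nhds hx₀pos hx₀L
      filter_upwards [hmem] with x hx
      have h1 := hge x hx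
      show U (-σ*t₀ + x₀) - ε * W x₀ ≤ U (-σ*t₀ + x) - ε * W x
      linarith only [h1, hUW]
    have hDeq : deriv U (-σ*t₀ + x₀) = ε * ((Complex.exp (Λ*(x₀:ℂ)) * Λ).im) := by
      have h1 := hlocmin.hasDerivAt_eq_zero hd1
      linarith only [h1]
    have hβder : HasDerivAt (fun t : ℝ => U (-σ*t + x₀)) (deriv U (-σ*t₀ + x₀) * (-σ)) t₀ := by
      have hin : HasDerivAt (fun t : ℝ => -σ*t + x₀) (-σ) t₀ := by
        simpa using ((hasDerivAt_id t₀).const_mul (-σ)).add_const x₀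
      have h2 := HasDerivAt.comp t₀ (hUd (-σ*t₀ + x₀)).hasDerivAt hin
      simpa [Function.comp_def] using h2
    have hUder_nonneg : 0 ≤ deriv U (-σ*t₀ + x₀) := by
      have hslope := hasDerivAt_iff_tendsto_slope.mp hβder
      have hslope' : Tendsto (slope (fun t : ℝ => U (-σ*t + x₀)) t₀) (nhdsWithin t₀ (Iio t₀))
          (nhds (deriv U (-σ*t₀ + x₀) * (-σ))) :=
        hslope.mono_left (nhdsWithin_mono _ (fun x hx => ne_of_lt hx))
      have hle : deriv U (-σ*t₀ + x₀) * (-σ) ≤ 0 := by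
        apply le_of_tendsto hslope'
        filter_upwards [Ioo_mem_nhdsLT_of_mem (⟨ht₀pos, le_rfl⟩ : t₀ ∈ Ioc 0 t₀)] with t htI
        rw [slope_def_field]
        have hnum : 0 < U (-σ*t + x₀) - U (-σ*t₀ + x₀) := by
          have h2 := hpre t htI.1.le htI.2 x₀ hx₀K
          linarith only [h2, hUW]
        have hden : t - t₀ < 0 := by linarith only [htI.2]
        exact le_of_lt (div_neg_of_pos_of_neg hnum hden)
      nlinarith only [hle, hσ]
    have hIm0 : 0 ≤ ((Complex.exp (Λ*(x₀:ℂ)) * Λ).im) := by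
      rw [hDeq] at hUder_nonneg
      nlinarith only [hεpos, hUder_nonneg]
    have hshift : ∀ δ : ℝ, |δ| ≤ 2 → ε * W (x₀ + δ) ≤ U ((-σ*t₀ + x₀) + δ) := by
      intro δ hδ
      obtain ⟨hδ1, hδ2⟩ := abs_le.mp hδ
      rw [show (-σ*t₀ + x₀) + δ = -σ*t₀ + (x₀ + δ) by ring]
      by_cases hyK : x₀ + δ ∈ Icc (0:ℝ) L
      · exact hge (x₀ + δ) hyK
      · have hWy : W (x₀ + δ) ≤ 0 := by
          rw [hW_eq]
          have hsin : Real.sin (ν*(x₀+δ)) ≤ 0 := by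
            simp only [mem_Icc, not_and_or, not_le] at hyK
            rcases hyK with h | h
            · apply Real.sin_nonpos_of_nonpos_of_neg_pi_le
              · nlinarith only [mul_pos hν0 (neg_pos.mpr h)]
              · have hgt : -2 < x₀ + δ := by linarith only [hx₀pos, hδ1]
                have h5 := mul_lt_mul_of_pos_left hgt hν0
                nlinarith only [h5, hπ3, hνle, hν0]
            · have h1 : Real.pi < ν*(x₀+δ) := by
                have h5 := mul_lt_mul_of_pos_left h hν0
                rw [hνL] at h5
                exact h5
              have h2 : ν*(x₀+δ) ≤ Real.pi + 2 := by
                have h5 : x₀ + δ ≤ L + 2 := by linarith only [hx₀L, hδ2]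
                have h6 := mul_le_mul_of_nonneg_left h5 hν0.le
                nlinarith only [h6, hνL, hνle, hν0]
              have h3 : 0 ≤ Real.sin (ν*(x₀+δ) - Real.pi) := by
                apply Real.sin_nonneg_of_nonneg_of_le_pi <;> linarith only [h1, h2, hπ3]
              rw [Real.sin_sub_pi] at h3
              linarith only [h3]
          nlinarith only [Real.exp_pos (μ*(x₀+δ)), hsin]
        nlinarith only [hU0 (-σ*t₀ + (x₀ + δ)), hεpos, hWy]
    have s1p := hshift d1 habs1
    have s2p := hshift d2 habs2
    have s3p := hshift d3 habs3
    have s1m : ε * W (x₀ - d1) ≤ U ((-σ*t₀ + x₀) - d1) := by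
      have h2 := hshift (-d1) (by rwa [abs_neg])
      simpa [sub_eq_add_neg] using h2
    have s2m : ε * W (x₀ - d2) ≤ U ((-σ*t₀ + x₀) - d2) := by
      have h2 := hshift (-d2) (by rwa [abs_neg])
      simpa [sub_eq_add_neg] using h2
    have s3m : ε * W (x₀ - d3) ≤ U ((-σ*t₀ + x₀) - d3) := by
      have h2 := hshift (-d3) (by rwa [abs_neg])
      simpa [sub_eq_add_neg] using h2
    have hEq := heq (-σ*t₀ + x₀)
    have hfUb : (a - κ) * (ε * W x₀) < f (ε * W x₀) := by
      apply hθ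
      · exact mul_pos hεpos hWx₀pos
      · calc ε * W x₀ ≤ min θ (U ξm/2) := hεW x₀ hx₀K
          _ ≤ θ := min_le_left _ _
    have hWid := WId x₀
    rw [hDeq, hUW] at hEq
    have e4 : (1/6) * (((ε*W (x₀+d1) + ε*W (x₀-d1)) + (ε*W (x₀+d2) + ε*W (x₀-d2))
        + (ε*W (x₀+d3) + ε*W (x₀-d3))) - 6*(ε*W x₀)) + (a-κ)*(ε*W x₀)
        = ε * (cp * ((Complex.exp (Λ*(x₀:ℂ)) * Λ).im)) := by
      linear_combination ε * hWid
    have e6 : 0 ≤ ε * σ * ((Complex.exp (Λ*(x₀:ℂ)) * Λ).im) :=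
      mul_nonneg (mul_nonneg hεpos.le hσ.le) hIm0
    have e7 : ε * σ * ((Complex.exp (Λ*(x₀:ℂ)) * Λ).im)
        = ε * (cp * ((Complex.exp (Λ*(x₀:ℂ)) * Λ).im))
          - c * (ε * ((Complex.exp (Λ*(x₀:ℂ)) * Λ).im)) := by
      rw [hσdef]; ring
    linarith only [hEq, e4, e6, e7, s1p, s1m, s2p, s2m, s3p, s3m, hfUb]
  · -- no touching: contradiction with U → 0 at -∞
    have hall : ∀ t : ℝ, 0 ≤ t → ∀ x ∈ Icc (0:ℝ) L, ε * W x < U (-σ*t + x) := by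
      intro t ht x hx
      by_contra hcontra
      push_neg at hcontra
      exact hA ⟨t, by rw [hAdef]; exact ⟨ht, x, hx, hcontra⟩⟩
    have hWhalf : W (L/2) = Real.exp (μ*(L/2)) := by
      rw [hW_eq, show ν*(L/2) = ν*L/2 by ring, hνL, Real.sin_pi_div_two, mul_one]
    have hρpos : 0 < ε * Real.exp (μ*(L/2)) := by positivity
    have hev : ∀ᶠ ξ in atBot, U ξ < ε * Real.exp (μ*(L/2)) := hbot.eventually_lt_const hρpos
    obtain ⟨ξb, hξb⟩ := eventually_atBot.mp hev
    have ht0 : 0 ≤ max 0 ((L/2 - ξb)/σ) := le_max_left _ _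
    have hpt : -σ*(max 0 ((L/2 - ξb)/σ)) + L/2 ≤ ξb := by
      have h1 : (L/2 - ξb)/σ ≤ max 0 ((L/2 - ξb)/σ) := le_max_right _ _
      have h2 : (L/2 - ξb) ≤ (max 0 ((L/2 - ξb)/σ)) * σ := by
        rw [div_le_iff₀ hσ] at h1
        linarith
      linarith
    have h3 := hall _ ht0 (L/2) ⟨by linarith, by linarith⟩
    rw [hWhalf] at h3
    have h4 := hξb _ hpt
    linarith


theorem stmt5 (α : ℝ) (f f' : ℝ → ℝ) (hf : FisherKPP f f')
    (c : ℝ) (U : ℝ → ℝ) (hU : IsTravelingWave α f c U) :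
    cstar (f' 0) α ≤ c := by
  obtain ⟨hfd, hf'c, hf0, hf1, ha, hfs⟩ := hf
  obtain ⟨hC, hrange, heq, hbot, htop⟩ := hU
  by_contra hcon
  push_neg at hcon
  have hsum : (delta1 α)^2 + (delta2 α)^2 + (delta3 α)^2 = 3/2 := by
    unfold delta1 delta2 delta3
    have h1 := Real.sin_sq_add_cos_sq α
    have h3 : Real.sqrt 3 ^ 2 = 3 := Real.sq_sqrt (by norm_num)
    nlinarith only [h1, h3]
  have hBdd : BddBelow {c : ℝ | ∃ l : ℝ, 0 < l ∧ c = gfun (f' 0) α l / l} := by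
    refine ⟨0, ?_⟩
    rintro x ⟨l, hl, rfl⟩
    have hge : f' 0 ≤ gfun (f' 0) α l := by
      unfold gfun
      linarith only [two_le_exp_add (l * delta1 α), two_le_exp_add (l * delta2 α),
        two_le_exp_add (l * delta3 α)]
    exact div_nonneg (by linarith only [hge, ha]) hl.le
  have H : ∀ l : ℝ, 0 < l → c * l <
      (1/6) * ((Real.exp (l * delta1 α) + Real.exp (-(l * delta1 α)))
        + (Real.exp (l * delta2 α) + Real.exp (-(l * delta2 α)))
        + (Real.exp (l * delta3 α) + Real.exp (-(l * delta3 α)))) - 1 + f' 0 := by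
    intro l hl
    have h1 : cstar (f' 0) α ≤ gfun (f' 0) α l / l := csInf_le hBdd ⟨l, hl, rfl⟩
    have h2 : c < gfun (f' 0) α l / l := lt_of_lt_of_le hcon h1
    have h3 := (lt_div_iff₀ hl).mp h2
    unfold gfun at h3
    linarith only [h3]
  have heq' : ∀ ξ, c * deriv U ξ =
      (1/6) * ((U (ξ + delta1 α) + U (ξ - delta1 α)) + (U (ξ + delta2 α) + U (ξ - delta2 α))
        + (U (ξ + delta3 α) + U (ξ - delta3 α)) - 6 * U ξ) + f (U ξ) := by
    intro ξ
    have h1 := heq ξ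
    unfold Dh at h1
    linarith only [h1]
  exact key (delta1 α) (delta2 α) (delta3 α) hsum f f' (hfd 0 ⟨le_rfl, zero_le_one⟩) hf0 ha c U hC
    (fun ξ => (hrange ξ).1) heq' hbot htop H
end

section
/- (Periodicity of the minimal wave speed.) For every α ∈ ℝ, c*(α + π/3) = c*(α). -/
open Real Set Filter

lemma gfun_shift (a α l : ℝ) : gfun a (α + Real.pi / 3) l = gfun a α l := by
  have s3 : Real.sqrt 3 * Real.sqrt 3 = 3 := Real.mul_self_sqrt (by norm_num)
  have h1 : delta1 (α + Real.pi / 3) = delta3 α := by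
    unfold delta1 delta3
    rw [Real.cos_add, Real.cos_pi_div_three, Real.sin_pi_div_three]
    ring
  have h2 : delta2 (α + Real.pi / 3) = delta1 α := by
    unfold delta2 delta1
    rw [Real.cos_add, Real.sin_add, Real.cos_pi_div_three, Real.sin_pi_div_three]
    linear_combination (Real.cos α / 4) * s3
  have h3 : delta3 (α + Real.pi / 3) = -(delta2 α) := by
    unfold delta3 delta2
    rw [Real.cos_add, Real.sin_add, Real.cos_pi_div_three, Real.sin_pi_div_three]
    linear_combination (-(Real.cos α) / 4) * s3
  simp only [gfun, h1, h2, h3]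
  rw [show l * -(delta2 α) = -(l * delta2 α) by ring, neg_neg]
  ring

theorem stmt7 (a : ℝ) (ha : 0 < a) (α : ℝ) :
    cstar a (α + Real.pi / 3) = cstar a α := by
  have : {c : ℝ | ∃ l : ℝ, 0 < l ∧ c = gfun a (α + Real.pi / 3) l / l}
      = {c : ℝ | ∃ l : ℝ, 0 < l ∧ c = gfun a α l / l} := by
    ext c
    exact exists_congr fun l => and_congr_right fun _ => by rw [gfun_shift]
  rw [cstar, cstar, this]
end
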